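/- For the linear control system ẋ = Ax + Bu on [t₀,t₁], if the pair (A,B) is controllable (i.e., the controllability matrix [B AB ... A^{n-1}B] has rank n), then the minimal L² control energy ∫_{t₀}^{t₁} ‖u(t)‖² dt needed to steer the state from x(t₀)=0 to x(t₁)=x₁ equals x₁ᵀ P⁻¹ x₁, where P = ∫_{t₀}^{t₁} e^{A(t₁-s)} B Bᵀ e^{Aᵀ(t₁-s)} ds is the controllability gramian. -/

import Mathlib

open Matrix NormedSpace

namespace Stmt7Aux

open Matrix NormedSpace intervalIntegral MeasureTheory Set


variable {n m k : ℕ}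

lemma cont_exp (A : Matrix (Fin n) (Fin n) ℝ) (t₁ : ℝ) :
    Continuous fun s : ℝ => NormedSpace.exp ((t₁ - s) • A) := by
  letI : NormedRing (Matrix (Fin n) (Fin n) ℝ) := Matrix.linftyOpNormedRing
  letI : NormedAlgebra ℝ (Matrix (Fin n) (Fin n) ℝ) := Matrix.linftyOpNormedAlgebra
  letI : NormedAlgebra ℚ (Matrix (Fin n) (Fin n) ℝ) := Matrix.linftyOpNormedAlgebra
  exact exp_continuous.comp ((continuous_const.sub continuous_id).smul continuous_const)

lemma exp_neg_cancel (A : Matrix (Fin n) (Fin n) ℝ) (t : ℝ) :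
    NormedSpace.exp ((-t) • A) * NormedSpace.exp (t • A) = 1 := by
  letI : NormedRing (Matrix (Fin n) (Fin n) ℝ) := Matrix.linftyOpNormedRing
  letI : NormedAlgebra ℝ (Matrix (Fin n) (Fin n) ℝ) := Matrix.linftyOpNormedAlgebra
  letI : NormedAlgebra ℚ (Matrix (Fin n) (Fin n) ℝ) := Matrix.linftyOpNormedAlgebra
  rw [← Matrix.exp_add_of_commute _ _ (((Commute.refl A).smul_left _).smul_right _),
    ← add_smul, neg_add_cancel, zero_smul, NormedSpace.exp_zero]

/-- component of an interval integral of a vector-valued function -/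
lemma integral_comp (a b : ℝ) (g : ℝ → Fin k → ℝ) (hg : Continuous g) (i : Fin k) :
    (∫ s in a..b, g s) i = ∫ s in a..b, g s i :=
  (ContinuousLinearMap.intervalIntegral_comp_comm
    (ContinuousLinearMap.proj (R := ℝ) (φ := fun _ : Fin k => ℝ) i)
    (hg.intervalIntegrable a b)).symm

/-- integrating a matrix-valued function entrywise commutes with mulVec -/
lemma integral_mulVec (a b : ℝ) (F : ℝ → Matrix (Fin n) (Fin n) ℝ) (hF : Continuous F)
    (Q : Matrix (Fin n) (Fin n) ℝ) (hQ : ∀ i j, Q i j = ∫ s in a..b, F s i j)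
    (y : Fin n → ℝ) :
    (∫ s in a..b, F s *ᵥ y) = Q *ᵥ y := by
  funext i
  rw [integral_comp a b _ (hF.matrix_mulVec continuous_const) i]
  have : ∀ s : ℝ, (F s *ᵥ y) i = ∑ j, F s i j * y j := fun s => rfl
  simp_rw [this]
  rw [intervalIntegral.integral_finset_sum]
  · have : (Q *ᵥ y) i = ∑ j, Q i j * y j := rfl
    rw [this]
    refine Finset.sum_congr rfl fun j _ => ?_
    rw [hQ i j, intervalIntegral.integral_mul_const]
  · exact fun j _ => ((hF.matrix_elem i j).mul continuous_const).intervalIntegrable a b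

lemma integral_dot (a b : ℝ) (F : ℝ → Matrix (Fin n) (Fin n) ℝ) (hF : Continuous F)
    (Q : Matrix (Fin n) (Fin n) ℝ) (hQ : ∀ i j, Q i j = ∫ s in a..b, F s i j)
    (x y : Fin n → ℝ) :
    x ⬝ᵥ Q *ᵥ y = ∫ s in a..b, x ⬝ᵥ F s *ᵥ y := by
  rw [← integral_mulVec a b F hF Q hQ y]
  have hcont : Continuous fun s => F s *ᵥ y := hF.matrix_mulVec continuous_const
  calc x ⬝ᵥ (∫ s in a..b, F s *ᵥ y)
      = ∑ i, x i * (∫ s in a..b, F s *ᵥ y) i := rfl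
    _ = ∑ i, ∫ s in a..b, x i * (F s *ᵥ y) i := by
        refine Finset.sum_congr rfl fun i _ => ?_
        rw [integral_comp a b _ hcont i, intervalIntegral.integral_const_mul]
    _ = ∫ s in a..b, ∑ i, x i * (F s *ᵥ y) i :=
        (intervalIntegral.integral_finset_sum (fun i _ =>
          (continuous_const.mul ((continuous_apply i).comp hcont)).intervalIntegrable a b)).symm
    _ = ∫ s in a..b, x ⬝ᵥ F s *ᵥ y := rfl

lemma eq_zero_of_integral {a b : ℝ} (hab : a < b) (f : ℝ → ℝ) (hf : Continuous f)
    (h0 : ∀ s, 0 ≤ f s) (hI : (∫ s in a..b, f s) = 0) : ∀ s ∈ Set.Ioc a b, f s = 0 := by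
  rw [intervalIntegral.integral_of_le hab.le] at hI
  have hae : f =ᵐ[volume.restrict (Set.Ioc a b)] 0 :=
    (MeasureTheory.setIntegral_eq_zero_iff_of_nonneg_ae
      (Filter.Eventually.of_forall h0) (hf.integrableOn_Ioc)).mp hI
  exact fun s hs => MeasureTheory.Measure.eqOn_Ioc_of_ae_eq volume hae
    hf.continuousOn continuous_zero.continuousOn hs

lemma key_vanish (A : Matrix (Fin n) (Fin n) ℝ) (B : Matrix (Fin n) (Fin m) ℝ)
    {a b : ℝ} (ξ : Fin n → ℝ)
    (h : ∀ τ ∈ Set.Ioo a b, Bᵀ *ᵥ (NormedSpace.exp (τ • Aᵀ) *ᵥ ξ) = 0) (k : ℕ) :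
    ∀ τ ∈ Set.Ioo a b, Bᵀ *ᵥ ((Aᵀ ^ k * NormedSpace.exp (τ • Aᵀ)) *ᵥ ξ) = 0 := by
  letI : NormedRing (Matrix (Fin n) (Fin n) ℝ) := Matrix.linftyOpNormedRing
  letI : NormedAlgebra ℝ (Matrix (Fin n) (Fin n) ℝ) := Matrix.linftyOpNormedAlgebra
  letI : NormedAlgebra ℚ (Matrix (Fin n) (Fin n) ℝ) := Matrix.linftyOpNormedAlgebra
  induction k with
  | zero =>
    intro τ hτ
    rw [pow_zero, one_mul, mulVec_mulVec]
    rw [← mulVec_mulVec]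
    exact h τ hτ
  | succ k ih =>
    intro τ hτ
    set Lraw : Matrix (Fin n) (Fin n) ℝ →ₗ[ℝ] (Fin m → ℝ) :=
      { toFun := fun M => Bᵀ *ᵥ ((Aᵀ ^ k * M) *ᵥ ξ)
        map_add' := fun M N => by
          show Bᵀ *ᵥ ((Aᵀ ^ k * (M + N)) *ᵥ ξ) =
            Bᵀ *ᵥ ((Aᵀ ^ k * M) *ᵥ ξ) + Bᵀ *ᵥ ((Aᵀ ^ k * N) *ᵥ ξ)
          rw [mul_add, Matrix.add_mulVec, Matrix.mulVec_add]
        map_smul' := fun c M => by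
          show Bᵀ *ᵥ ((Aᵀ ^ k * (c • M)) *ᵥ ξ) = c • (Bᵀ *ᵥ ((Aᵀ ^ k * M) *ᵥ ξ))
          rw [Matrix.mul_smul, Matrix.smul_mulVec, Matrix.mulVec_smul] } with hLraw
    set L := LinearMap.toContinuousLinearMap Lraw with hL
    have hD : HasDerivAt (fun t : ℝ => L (NormedSpace.exp (t • Aᵀ))) (L (NormedSpace.exp (τ • Aᵀ) * Aᵀ)) τ :=
      L.hasFDerivAt.comp_hasDerivAt τ (hasDerivAt_exp_smul_const Aᵀ τ)
    have hzero : HasDerivAt (fun t : ℝ => L (NormedSpace.exp (t • Aᵀ))) 0 τ := by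
      refine HasDerivAt.congr_of_eventuallyEq (hasDerivAt_const τ 0) ?_
      filter_upwards [Ioo_mem_nhds hτ.1 hτ.2] with t ht
      exact ih t ht
    have h0 : L (NormedSpace.exp (τ • Aᵀ) * Aᵀ) = 0 := hD.unique hzero
    have hc : NormedSpace.exp (τ • Aᵀ) * Aᵀ = Aᵀ * NormedSpace.exp (τ • Aᵀ) :=
      (((Commute.refl Aᵀ).smul_left τ).exp_left).eq
    have : Bᵀ *ᵥ ((Aᵀ ^ k * (Aᵀ * NormedSpace.exp (τ • Aᵀ))) *ᵥ ξ) = 0 := by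
      rw [← hc]; exact h0
    rw [← mul_assoc, ← pow_succ] at this
    exact this

lemma surj_of_rank {κ : Type*} [Fintype κ] (C : Matrix (Fin n) κ ℝ) (h : C.rank = n) :
    Function.Surjective C.mulVecLin := by
  rw [← LinearMap.range_eq_top]
  apply Submodule.eq_top_of_finrank_eq
  rw [Module.finrank_fin_fun]
  exact h

lemma eta_zero {κ : Type*} [Fintype κ] (C : Matrix (Fin n) κ ℝ) (hsurj : Function.Surjective C.mulVecLin)
    (η : Fin n → ℝ) (hη : η ᵥ* C = 0) : η = 0 := by
  funext r
  obtain ⟨z, hz⟩ := hsurj (Pi.single r 1)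
  have : η ⬝ᵥ (C *ᵥ z) = 0 := by
    rw [Matrix.dotProduct_mulVec, hη, zero_dotProduct]
  rw [Matrix.mulVecLin_apply] at hz
  rw [hz, dotProduct_single, mul_one] at this
  simpa using this

lemma integral_dot_const (a b : ℝ) (g : ℝ → Fin n → ℝ) (hg : Continuous g) (c : Fin n → ℝ) :
    (∫ s in a..b, c ⬝ᵥ g s) = c ⬝ᵥ ∫ s in a..b, g s := by
  calc (∫ s in a..b, c ⬝ᵥ g s) = ∫ s in a..b, ∑ i, c i * g s i := rfl
    _ = ∑ i, ∫ s in a..b, c i * g s i :=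
        intervalIntegral.integral_finset_sum (fun i _ =>
          (continuous_const.mul ((continuous_apply i).comp hg)).intervalIntegrable a b)
    _ = ∑ i, c i * ∫ s in a..b, g s i := by
        exact Finset.sum_congr rfl fun i _ => intervalIntegral.integral_const_mul _ _
    _ = ∑ i, c i * (∫ s in a..b, g s) i := by
        exact Finset.sum_congr rfl fun i _ => by rw [integral_comp a b g hg i]
    _ = c ⬝ᵥ ∫ s in a..b, g s := rfl

end Stmt7Aux

set_option maxHeartbeats 1000000 in
/-- If `(A,B)` is controllable, the minimal L² control energy steering `ẋ = Ax + Bu`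
from `x(t₀) = 0` to `x(t₁) = x₁` equals `x₁ᵀ P⁻¹ x₁`, where
`P = ∫_{t₀}^{t₁} e^{A(t₁-s)} B Bᵀ e^{Aᵀ(t₁-s)} ds` is the controllability gramian.
Reaching `x₁` is expressed by the variation-of-constants formula. -/
theorem stmt7 {n m : ℕ} (A : Matrix (Fin n) (Fin n) ℝ) (B : Matrix (Fin n) (Fin m) ℝ)
    (t₀ t₁ : ℝ) (ht : t₀ < t₁)
    (hctrb : (Matrix.of fun (i : Fin n) (jk : Fin n × Fin m) =>
      (A ^ (jk.1 : ℕ) * B) i jk.2).rank = n)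
    (P : Matrix (Fin n) (Fin n) ℝ)
    (hP : ∀ i j, P i j = ∫ s in t₀..t₁,
      (NormedSpace.exp ((t₁ - s) • A) * B * Bᵀ * (NormedSpace.exp ((t₁ - s) • A))ᵀ) i j)
    (x₁ : Fin n → ℝ) :
    IsLeast {E : ℝ | ∃ u : ℝ → Fin m → ℝ, Continuous u ∧
        (x₁ = ∫ s in t₀..t₁, (NormedSpace.exp ((t₁ - s) • A)).mulVec (B.mulVec (u s))) ∧
        E = ∫ s in t₀..t₁, ∑ i, (u s i) ^ 2}
      (x₁ ⬝ᵥ P⁻¹.mulVec x₁) := by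
  have hTc : Continuous fun s : ℝ => NormedSpace.exp ((t₁ - s) • A) := Stmt7Aux.cont_exp A t₁
  have hMc : Continuous fun s : ℝ =>
      NormedSpace.exp ((t₁ - s) • A) * B * Bᵀ * (NormedSpace.exp ((t₁ - s) • A))ᵀ :=
    ((hTc.matrix_mul continuous_const).matrix_mul continuous_const).matrix_mul
      hTc.matrix_transpose
  -- rewriting the quadratic form as a sum of squares
  have hquad : ∀ (s : ℝ) (ξ : Fin n → ℝ),
      ξ ⬝ᵥ (NormedSpace.exp ((t₁ - s) • A) * B * Bᵀ * (NormedSpace.exp ((t₁ - s) • A))ᵀ) *ᵥ ξ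
        = ∑ i, (((NormedSpace.exp ((t₁ - s) • A) * B)ᵀ *ᵥ ξ) i) ^ 2 := by
    intro s ξ
    have h1 : NormedSpace.exp ((t₁ - s) • A) * B * Bᵀ * (NormedSpace.exp ((t₁ - s) • A))ᵀ
        = (NormedSpace.exp ((t₁ - s) • A) * B) * (NormedSpace.exp ((t₁ - s) • A) * B)ᵀ := by
      rw [transpose_mul, ← Matrix.mul_assoc]
    rw [h1, ← mulVec_mulVec, Matrix.dotProduct_mulVec, ← Matrix.mulVec_transpose]
    simp [dotProduct, sq]
  -- invertibility of the gramian
  have hPinj : ∀ ξ : Fin n → ℝ, P *ᵥ ξ = 0 → ξ = 0 := by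
    intro ξ hξ
    have hint : (∫ s in t₀..t₁,
        ξ ⬝ᵥ (NormedSpace.exp ((t₁ - s) • A) * B * Bᵀ * (NormedSpace.exp ((t₁ - s) • A))ᵀ) *ᵥ ξ) = 0 := by
      rw [← Stmt7Aux.integral_dot t₀ t₁ _ hMc P hP ξ ξ, hξ, dotProduct_zero]
    have hf0 : ∀ s ∈ Set.Ioc t₀ t₁,
        ξ ⬝ᵥ (NormedSpace.exp ((t₁ - s) • A) * B * Bᵀ * (NormedSpace.exp ((t₁ - s) • A))ᵀ) *ᵥ ξ = 0 := by
      refine Stmt7Aux.eq_zero_of_integral ht _ ?_ ?_ hint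
      · exact continuous_const.dotProduct (hMc.matrix_mulVec continuous_const)
      · intro s
        rw [hquad s ξ]
        exact Finset.sum_nonneg fun i _ => sq_nonneg _
    have hw : ∀ τ ∈ Set.Ioo (0:ℝ) (t₁ - t₀), Bᵀ *ᵥ (NormedSpace.exp (τ • Aᵀ) *ᵥ ξ) = 0 := by
      intro τ hτ
      have hs : t₁ - τ ∈ Set.Ioc t₀ t₁ := ⟨by linarith [hτ.2], by linarith [hτ.1]⟩
      have h2 := hf0 _ hs
      rw [hquad] at h2
      have hzero : (NormedSpace.exp ((t₁ - (t₁ - τ)) • A) * B)ᵀ *ᵥ ξ = 0 := by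
        funext i
        have h3 := (Finset.sum_eq_zero_iff_of_nonneg
          (fun i _ => sq_nonneg _)).mp h2 i (Finset.mem_univ i)
        exact (pow_eq_zero_iff (by norm_num : (2:ℕ) ≠ 0)).mp h3
      have ht1 : t₁ - (t₁ - τ) = τ := by ring
      rw [ht1] at hzero
      rw [transpose_mul, ← mulVec_mulVec, ← Matrix.transpose_smul, Matrix.exp_transpose] at *
      exact hzero
    have hvan := Stmt7Aux.key_vanish A B ξ hw
    have hτ₀ : (t₁ - t₀)/2 ∈ Set.Ioo (0:ℝ) (t₁ - t₀) := ⟨by linarith, by linarith⟩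
    have hk : ∀ j : ℕ, (NormedSpace.exp (((t₁ - t₀)/2) • Aᵀ) *ᵥ ξ) ᵥ* (A ^ j * B) = 0 := by
      intro j
      have h4 := hvan j _ hτ₀
      rw [← mulVec_mulVec, mulVec_mulVec, ← Matrix.transpose_pow, ← transpose_mul,
        Matrix.mulVec_transpose] at h4
      exact h4
    have hηC : (NormedSpace.exp (((t₁ - t₀)/2) • Aᵀ) *ᵥ ξ) ᵥ* (Matrix.of fun (i : Fin n) (jk : Fin n × Fin m) =>
        (A ^ (jk.1 : ℕ) * B) i jk.2) = 0 := by
      funext jk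
      have := congrFun (hk jk.1) jk.2
      simpa [Matrix.vecMul, dotProduct] using this
    have hη0 : NormedSpace.exp (((t₁ - t₀)/2) • Aᵀ) *ᵥ ξ = 0 :=
      Stmt7Aux.eta_zero _ (Stmt7Aux.surj_of_rank _ hctrb) _ hηC
    have hξ' : ξ = NormedSpace.exp ((-((t₁ - t₀)/2)) • Aᵀ) *ᵥ (NormedSpace.exp (((t₁ - t₀)/2) • Aᵀ) *ᵥ ξ) := by
      rw [mulVec_mulVec, Stmt7Aux.exp_neg_cancel, one_mulVec]
    rw [hξ', hη0, mulVec_zero]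
  have hPunit : IsUnit P := by
    rw [← Matrix.mulVec_injective_iff_isUnit]
    intro x y hxy
    have h5 : P *ᵥ (x - y) = 0 := by
      rw [Matrix.mulVec_sub]
      rw [show P.mulVec x = P.mulVec y from hxy, sub_self]
    exact sub_eq_zero.mp (hPinj _ h5)
  have hPP : P * P⁻¹ = 1 := Matrix.mul_nonsing_inv P ((Matrix.isUnit_iff_isUnit_det P).mp hPunit)
  have hPc : P *ᵥ (P⁻¹ *ᵥ x₁) = x₁ := by rw [mulVec_mulVec, hPP, one_mulVec]
  have hvc : Continuous fun s : ℝ => (NormedSpace.exp ((t₁ - s) • A) * B)ᵀ *ᵥ (P⁻¹ *ᵥ x₁) :=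
    ((hTc.matrix_mul continuous_const).matrix_transpose).matrix_mulVec continuous_const
  -- the energy of the optimal control
  have henergy : (∫ s in t₀..t₁, ∑ i, (((NormedSpace.exp ((t₁ - s) • A) * B)ᵀ *ᵥ (P⁻¹ *ᵥ x₁)) i) ^ 2)
      = (P⁻¹ *ᵥ x₁) ⬝ᵥ x₁ := by
    have h6 : (∫ s in t₀..t₁, ∑ i, (((NormedSpace.exp ((t₁ - s) • A) * B)ᵀ *ᵥ (P⁻¹ *ᵥ x₁)) i) ^ 2)
        = ∫ s in t₀..t₁, (P⁻¹ *ᵥ x₁) ⬝ᵥ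
            (NormedSpace.exp ((t₁ - s) • A) * B * Bᵀ * (NormedSpace.exp ((t₁ - s) • A))ᵀ) *ᵥ (P⁻¹ *ᵥ x₁) :=
      intervalIntegral.integral_congr fun s _ => (hquad s _).symm
    rw [h6, ← Stmt7Aux.integral_dot t₀ t₁ _ hMc P hP, hPc]
  constructor
  · refine ⟨fun s => (NormedSpace.exp ((t₁ - s) • A) * B)ᵀ *ᵥ (P⁻¹ *ᵥ x₁), hvc, ?_, ?_⟩
    · have h7 : (fun s => NormedSpace.exp ((t₁ - s) • A) *ᵥ
          (B *ᵥ ((NormedSpace.exp ((t₁ - s) • A) * B)ᵀ *ᵥ (P⁻¹ *ᵥ x₁))))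
          = fun s => (NormedSpace.exp ((t₁ - s) • A) * B * Bᵀ * (NormedSpace.exp ((t₁ - s) • A))ᵀ) *ᵥ (P⁻¹ *ᵥ x₁) := by
        funext s
        rw [mulVec_mulVec, mulVec_mulVec, transpose_mul, ← Matrix.mul_assoc]
      show x₁ = ∫ s in t₀..t₁, NormedSpace.exp ((t₁ - s) • A) *ᵥ
          (B *ᵥ ((NormedSpace.exp ((t₁ - s) • A) * B)ᵀ *ᵥ (P⁻¹ *ᵥ x₁)))
      rw [h7, Stmt7Aux.integral_mulVec t₀ t₁ _ hMc P hP, hPc]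
    · rw [henergy, dotProduct_comm]
  · rintro E ⟨u, hu, hreach, rfl⟩
    have hguc : Continuous fun s : ℝ => NormedSpace.exp ((t₁ - s) • A) *ᵥ (B *ᵥ u s) :=
      hTc.matrix_mulVec (continuous_const.matrix_mulVec hu)
    -- cross term
    have hcross : (∫ s in t₀..t₁,
        ((NormedSpace.exp ((t₁ - s) • A) * B)ᵀ *ᵥ (P⁻¹ *ᵥ x₁)) ⬝ᵥ u s) = (P⁻¹ *ᵥ x₁) ⬝ᵥ x₁ := by
      have h8 : ∀ s : ℝ, ((NormedSpace.exp ((t₁ - s) • A) * B)ᵀ *ᵥ (P⁻¹ *ᵥ x₁)) ⬝ᵥ u s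
          = (P⁻¹ *ᵥ x₁) ⬝ᵥ (NormedSpace.exp ((t₁ - s) • A) *ᵥ (B *ᵥ u s)) := by
        intro s
        rw [Matrix.mulVec_transpose, ← Matrix.dotProduct_mulVec, mulVec_mulVec]
      have h9 : (∫ s in t₀..t₁, ((NormedSpace.exp ((t₁ - s) • A) * B)ᵀ *ᵥ (P⁻¹ *ᵥ x₁)) ⬝ᵥ u s)
          = ∫ s in t₀..t₁, (P⁻¹ *ᵥ x₁) ⬝ᵥ (NormedSpace.exp ((t₁ - s) • A) *ᵥ (B *ᵥ u s)) :=
        intervalIntegral.integral_congr fun s _ => h8 s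
      rw [h9, Stmt7Aux.integral_dot_const t₀ t₁ (fun s => NormedSpace.exp ((t₁ - s) • A) *ᵥ (B *ᵥ u s)) hguc, ← hreach]
    -- expansion
    have hexp : ∀ s : ℝ, ∑ i, (u s i) ^ 2
        = (∑ i, (u s i - ((NormedSpace.exp ((t₁ - s) • A) * B)ᵀ *ᵥ (P⁻¹ *ᵥ x₁)) i) ^ 2)
          + 2 * (((NormedSpace.exp ((t₁ - s) • A) * B)ᵀ *ᵥ (P⁻¹ *ᵥ x₁)) ⬝ᵥ u s)
          - ∑ i, (((NormedSpace.exp ((t₁ - s) • A) * B)ᵀ *ᵥ (P⁻¹ *ᵥ x₁)) i) ^ 2 := by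
      intro s
      simp only [dotProduct, Finset.mul_sum, ← Finset.sum_add_distrib, ← Finset.sum_sub_distrib]
      exact Finset.sum_congr rfl fun i _ => by ring
    have hIdiff : IntervalIntegrable (fun s => ∑ i, (u s i -
        ((NormedSpace.exp ((t₁ - s) • A) * B)ᵀ *ᵥ (P⁻¹ *ᵥ x₁)) i) ^ 2) MeasureTheory.volume t₀ t₁ :=
      (continuous_finset_sum _ fun i _ =>
        (((continuous_apply i).comp hu).sub ((continuous_apply i).comp hvc)).pow 2).intervalIntegrable t₀ t₁
    have hIcross : IntervalIntegrable (fun s =>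
        2 * (((NormedSpace.exp ((t₁ - s) • A) * B)ᵀ *ᵥ (P⁻¹ *ᵥ x₁)) ⬝ᵥ u s)) MeasureTheory.volume t₀ t₁ :=
      (continuous_const.mul (hvc.dotProduct hu)).intervalIntegrable t₀ t₁
    have hIv : IntervalIntegrable (fun s =>
        ∑ i, (((NormedSpace.exp ((t₁ - s) • A) * B)ᵀ *ᵥ (P⁻¹ *ᵥ x₁)) i) ^ 2) MeasureTheory.volume t₀ t₁ :=
      (continuous_finset_sum _ fun i _ =>
        ((continuous_apply i).comp hvc).pow 2).intervalIntegrable t₀ t₁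
    have hsplit : (∫ s in t₀..t₁, ∑ i, (u s i) ^ 2)
        = (∫ s in t₀..t₁, ∑ i, (u s i -
            ((NormedSpace.exp ((t₁ - s) • A) * B)ᵀ *ᵥ (P⁻¹ *ᵥ x₁)) i) ^ 2)
          + 2 * ((P⁻¹ *ᵥ x₁) ⬝ᵥ x₁) - ((P⁻¹ *ᵥ x₁) ⬝ᵥ x₁) := by
      have h10 : (∫ s in t₀..t₁, ∑ i, (u s i) ^ 2)
          = ∫ s in t₀..t₁, ((∑ i, (u s i -
              ((NormedSpace.exp ((t₁ - s) • A) * B)ᵀ *ᵥ (P⁻¹ *ᵥ x₁)) i) ^ 2)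
            + 2 * (((NormedSpace.exp ((t₁ - s) • A) * B)ᵀ *ᵥ (P⁻¹ *ᵥ x₁)) ⬝ᵥ u s)
            - ∑ i, (((NormedSpace.exp ((t₁ - s) • A) * B)ᵀ *ᵥ (P⁻¹ *ᵥ x₁)) i) ^ 2) :=
        intervalIntegral.integral_congr fun s _ => hexp s
      rw [h10, intervalIntegral.integral_sub (hIdiff.add hIcross) hIv,
        intervalIntegral.integral_add hIdiff hIcross,
        intervalIntegral.integral_const_mul, hcross, henergy]
    have hnn : 0 ≤ ∫ s in t₀..t₁, ∑ i, (u s i -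
        ((NormedSpace.exp ((t₁ - s) • A) * B)ᵀ *ᵥ (P⁻¹ *ᵥ x₁)) i) ^ 2 :=
      intervalIntegral.integral_nonneg ht.le fun s _ =>
        Finset.sum_nonneg fun i _ => sq_nonneg _
    have hgoal : x₁ ⬝ᵥ P⁻¹.mulVec x₁ = (P⁻¹ *ᵥ x₁) ⬝ᵥ x₁ := dotProduct_comm _ _
    rw [hgoal]
    rw [hsplit]
    linarith
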